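/- If the graph G_M(R) contains a cycle, then the connected component of G_M(R) containing that cycle is a cycle of length four; equivalently, the vertex set of that component is {c, c+(1,0), c+(0,1), c+(1,1)} for some grid node c. -/

import Mathlib

/-- Manhattan distance on the grid ℤ × ℤ. -/
def md (u v : ℤ × ℤ) : ℕ := (u.1 - v.1).natAbs + (u.2 - v.2).natAbs

/-- Eccentricity of a grid node with respect to the robot set `R`:
the maximum Manhattan distance from a robot of `R` to the node. -/
def ecc (R : Finset (ℤ × ℤ)) (v : ℤ × ℤ) : ℕ := R.sup (fun u => md u v)

/-- `v` is a min-max node of `R`. -/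
def IsMinMax (R : Finset (ℤ × ℤ)) (v : ℤ × ℤ) : Prop :=
  ∀ v' : ℤ × ℤ, ecc R v ≤ ecc R v'

/-- The subgraph `G_M(R)` of the infinite grid graph induced by the set of
min-max nodes of `R`: two min-max nodes are adjacent iff their Manhattan
distance is 1. -/
def GM (R : Finset (ℤ × ℤ)) : SimpleGraph {v : ℤ × ℤ // IsMinMax R v} where
  Adj u v := md u.val v.val = 1
  symm := by
    constructor
    intro u v h
    simp only [md] at h ⊢
    omega
  loopless := by
    constructor
    intro u h
    simp [md] at h

/-- The bi-infinite path graph on `ℤ`. -/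
def PZ : SimpleGraph ℤ where
  Adj a b := a = b + 1 ∨ b = a + 1
  symm := by
    constructor
    intro a b h
    rcases h with h | h
    · right; exact h
    · left; exact h
  loopless := by
    constructor
    intro a h
    rcases h with h | h <;> omega

lemma pz_walk_le (a : ℤ) {x y : ℤ} (w : PZ.Walk x y) :
    s(a, a + 1) ∉ w.edges → x ≤ a → y ≤ a := by
  induction w with
  | nil => exact fun _ h => h
  | @cons u v z h q ih =>
    intro he hx
    simp only [SimpleGraph.Walk.edges_cons, List.mem_cons, not_or] at he
    refine ih he.2 ?_
    rcases h with h | h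
    · omega
    · by_contra hc
      have hu : u = a := by omega
      have hv : v = a + 1 := by omega
      exact he.1 (by rw [hu, hv])

lemma PZ_acyclic : PZ.IsAcyclic := by
  rw [SimpleGraph.isAcyclic_iff_forall_adj_isBridge]
  intro v w h
  rw [SimpleGraph.isBridge_iff_adj_and_forall_walk_mem_edges]
  intro p
  by_contra hne
  rcases h with h | h
  · -- v = w + 1
    have hle : v ≤ w := by
      refine pz_walk_le w p.reverse ?_ le_rfl
      rw [SimpleGraph.Walk.edges_reverse, List.mem_reverse]
      intro hm
      apply hne
      have hsym : s(w, w + 1) = s(v, w) := by rw [← h]; exact Sym2.eq_swap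
      rwa [hsym] at hm
    omega
  · -- w = v + 1
    have hle : w ≤ v := by
      refine pz_walk_le v p ?_ le_rfl
      have hsym : s(v, v + 1) = s(v, w) := by rw [h]
      rw [hsym]
      exact hne
    omega

lemma gm_adj {R : Finset (ℤ × ℤ)} {u v : {v : ℤ × ℤ // IsMinMax R v}} :
    (GM R).Adj u v ↔ md u.val v.val = 1 := Iff.rfl

/-- If `G_M(R)` contains a cycle, then the connected component of
`G_M(R)` containing that cycle is a cycle of length four: its vertex set is
`{c, c+(1,0), c+(0,1), c+(1,1)}` for some grid node `c`. -/
theorem stmt_13 (R : Finset (ℤ × ℤ)) (hR : R.Nonempty)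
    (v₀ : {v : ℤ × ℤ // IsMinMax R v})
    (p : (GM R).Walk v₀ v₀) (hp : p.IsCycle) :
    ∃ c : ℤ × ℤ, ∀ w : {v : ℤ × ℤ // IsMinMax R v},
      (GM R).Reachable v₀ w ↔
        w.val ∈ ({c, (c.1 + 1, c.2), (c.1, c.2 + 1), (c.1 + 1, c.2 + 1)} :
          Set (ℤ × ℤ)) := by
  classical
  obtain ⟨uA, huA, hA⟩ := R.exists_max_image (fun u => u.1 + u.2) hR
  obtain ⟨uB, huB, hB⟩ := R.exists_min_image (fun u => u.1 + u.2) hR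
  obtain ⟨uC, huC, hC⟩ := R.exists_max_image (fun u => u.1 - u.2) hR
  obtain ⟨uD, huD, hD⟩ := R.exists_min_image (fun u => u.1 - u.2) hR
  obtain ⟨m, hm⟩ : ∃ m, m = ecc R v₀.val := ⟨_, rfl⟩
  set SA := uA.1 + uA.2 with hSA
  set SB := uB.1 + uB.2 with hSB
  set TC := uC.1 - uC.2 with hTC
  set TD := uD.1 - uD.2 with hTD
  -- every min-max node lies in the rectangle (in rotated coordinates)
  have hstar : ∀ v : ℤ × ℤ, IsMinMax R v →
      SA - m ≤ v.1 + v.2 ∧ v.1 + v.2 ≤ SB + m ∧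
      TC - m ≤ v.1 - v.2 ∧ v.1 - v.2 ≤ TD + m := by
    intro v hv
    have hub : ∀ u ∈ R, md u v ≤ m := by
      intro u hu
      have h1 : md u v ≤ ecc R v := Finset.le_sup (f := fun u => md u v) hu
      have h2 : ecc R v ≤ ecc R v₀.val := hv v₀.val
      omega
    have h1 := hub uA huA
    have h2 := hub uB huB
    have h3 := hub uC huC
    have h4 := hub uD huD
    simp only [md] at h1 h2 h3 h4
    omega
  -- every node of the rectangle is min-max
  have hmem_minmax : ∀ x y : ℤ,
      SA - m ≤ x + y → x + y ≤ SB + m → TC - m ≤ x - y → x - y ≤ TD + m →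
      IsMinMax R (x, y) := by
    intro x y h1 h2 h3 h4 v'
    have hle : ecc R (x, y) ≤ m := by
      apply Finset.sup_le
      intro u hu
      have ha := hA u hu
      have hb := hB u hu
      have hc := hC u hu
      have hd := hD u hu
      simp only [md]
      omega
    have h5 : ecc R v₀.val ≤ ecc R v' := v₀.prop v'
    omega
  -- minimality: the interior of the shrunk rectangle contains no grid node
  have hmin : ∀ x y : ℤ,
      ¬(SA - m < x + y ∧ x + y < SB + m ∧ TC - m < x - y ∧ x - y < TD + m) := by
    rintro x y ⟨h1, h2, h3, h4⟩
    have hAB : SB ≤ SA := hA uB huB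
    have h0 : 0 < m := by omega
    have hlt : ecc R (x, y) < m := by
      rw [ecc, Finset.sup_lt_iff (by simpa using h0)]
      intro u hu
      have ha := hA u hu
      have hb := hB u hu
      have hc := hC u hu
      have hd := hD u hu
      simp only [md]
      omega
    have h5 : ecc R v₀.val ≤ ecc R (x, y) := v₀.prop (x, y)
    omega
  have hmin' : ∀ s t : ℤ, (s + t) % 2 = 0 →
      ¬(SA - m < s ∧ s < SB + m ∧ TC - m < t ∧ t < TD + m) := by
    rintro s t hst ⟨h1, h2, h3, h4⟩
    exact hmin ((s + t) / 2) ((s - t) / 2) ⟨by omega, by omega, by omega, by omega⟩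
  have hva := hstar v₀.val v₀.prop
  by_cases hws : SB + m ≤ SA - m + 1
  · -- degenerate in s: the graph embeds in the path on ℤ, contradicting the cycle
    exfalso
    have hincl : ∀ v : {v : ℤ × ℤ // IsMinMax R v},
        SA - m ≤ v.val.1 + v.val.2 ∧ v.val.1 + v.val.2 ≤ SA - m + 1 := by
      intro v
      have := hstar v.val v.prop
      omega
    let F : GM R →g PZ :=
      { toFun := fun w => w.val.1 - w.val.2,
        map_rel' := by
          intro u v h
          have h' : md u.val v.val = 1 := h
          simp only [md] at h'
          show u.val.1 - u.val.2 = (v.val.1 - v.val.2) + 1 ∨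
            v.val.1 - v.val.2 = (u.val.1 - u.val.2) + 1
          omega }
    have hinj : Function.Injective F := by
      intro u v h
      have h' : u.val.1 - u.val.2 = v.val.1 - v.val.2 := h
      have hu := hincl u
      have hv := hincl v
      apply Subtype.ext
      rw [Prod.ext_iff]
      constructor <;> omega
    exact PZ_acyclic (p.map F)
      ((SimpleGraph.Walk.map_isCycle_iff_of_injective hinj).mpr hp)
  · by_cases hwt : TD + m ≤ TC - m + 1
    · -- degenerate in t
      exfalso
      have hincl : ∀ v : {v : ℤ × ℤ // IsMinMax R v},
          TC - m ≤ v.val.1 - v.val.2 ∧ v.val.1 - v.val.2 ≤ TC - m + 1 := by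
        intro v
        have := hstar v.val v.prop
        omega
      let F : GM R →g PZ :=
        { toFun := fun w => w.val.1 + w.val.2,
          map_rel' := by
            intro u v h
            have h' : md u.val v.val = 1 := h
            simp only [md] at h'
            show u.val.1 + u.val.2 = (v.val.1 + v.val.2) + 1 ∨
              v.val.1 + v.val.2 = (u.val.1 + u.val.2) + 1
            omega }
      have hinj : Function.Injective F := by
        intro u v h
        have h' : u.val.1 + u.val.2 = v.val.1 + v.val.2 := h
        have hu := hincl u
        have hv := hincl v
        apply Subtype.ext
        rw [Prod.ext_iff]
        constructor <;> omega
      exact PZ_acyclic (p.map F)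
        ((SimpleGraph.Walk.map_isCycle_iff_of_injective hinj).mpr hp)
    · -- main case: both widths are at least 2
      push_neg at hws hwt
      rcases Int.even_or_odd (SA + TC) with ⟨k, hk⟩ | ⟨k, hk⟩
      · -- even corner parity is impossible
        exfalso
        exact hmin' (SA - m + 1) (TC - m + 1) (by omega)
          ⟨by omega, by omega, by omega, by omega⟩
      · -- odd corner parity: widths are exactly 2
        have hws2 : SB + m = SA - m + 2 := by
          by_contra hcon
          exact hmin' (SA - m + 2) (TC - m + 1) (by omega)
            ⟨by omega, by omega, by omega, by omega⟩
        have hwt2 : TD + m = TC - m + 2 := by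
          by_contra hcon
          exact hmin' (SA - m + 1) (TC - m + 2) (by omega)
            ⟨by omega, by omega, by omega, by omega⟩
        -- the four min-max nodes
        set cx : ℤ := k - m + 1 with hcx
        set cy : ℤ := SA - m - cx with hcy
        have hmm0 : IsMinMax R (cx, cy) :=
          hmem_minmax cx cy (by omega) (by omega) (by omega) (by omega)
        have hmm1 : IsMinMax R (cx + 1, cy) :=
          hmem_minmax (cx + 1) cy (by omega) (by omega) (by omega) (by omega)
        have hmm2 : IsMinMax R (cx, cy + 1) :=
          hmem_minmax cx (cy + 1) (by omega) (by omega) (by omega) (by omega)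
        have hmm3 : IsMinMax R (cx + 1, cy + 1) :=
          hmem_minmax (cx + 1) (cy + 1) (by omega) (by omega) (by omega) (by omega)
        let P0 : {v : ℤ × ℤ // IsMinMax R v} := ⟨(cx, cy), hmm0⟩
        let P1 : {v : ℤ × ℤ // IsMinMax R v} := ⟨(cx + 1, cy), hmm1⟩
        let P2 : {v : ℤ × ℤ // IsMinMax R v} := ⟨(cx, cy + 1), hmm2⟩
        let P3 : {v : ℤ × ℤ // IsMinMax R v} := ⟨(cx + 1, cy + 1), hmm3⟩
        have a01 : (GM R).Adj P0 P1 := by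
          show md (cx, cy) (cx + 1, cy) = 1
          simp only [md]
          omega
        have a02 : (GM R).Adj P0 P2 := by
          show md (cx, cy) (cx, cy + 1) = 1
          simp only [md]
          omega
        have a13 : (GM R).Adj P1 P3 := by
          show md (cx + 1, cy) (cx + 1, cy + 1) = 1
          simp only [md]
          omega
        have hcompw : ∀ w : {v : ℤ × ℤ // IsMinMax R v},
            w.val = (cx, cy) ∨ w.val = (cx + 1, cy) ∨
            w.val = (cx, cy + 1) ∨ w.val = (cx + 1, cy + 1) := by
          intro w
          have hw := hstar w.val w.prop
          simp only [Prod.ext_iff]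
          omega
        have hreachP : ∀ w : {v : ℤ × ℤ // IsMinMax R v}, (GM R).Reachable P0 w := by
          intro w
          rcases hcompw w with h | h | h | h
          · have : w = P0 := Subtype.ext h
            rw [this]
          · have : w = P1 := Subtype.ext h
            rw [this]
            exact a01.reachable
          · have : w = P2 := Subtype.ext h
            rw [this]
            exact a02.reachable
          · have : w = P3 := Subtype.ext h
            rw [this]
            exact a01.reachable.trans a13.reachable
        refine ⟨(cx, cy), fun w => ⟨fun _ => ?_, fun _ => ?_⟩⟩
        · simp only [Set.mem_insert_iff, Set.mem_singleton_iff]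
          exact hcompw w
        · exact (hreachP v₀).symm.trans (hreachP w)
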